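/- Let A and B be positive semidefinite matrices with 0 ⪯ A ⪯ B (Loewner order) and Tr A > 0. Then Φ(A) ⪯ Φ(B), i.e., the map Φ(A) = A − A²/Tr(A) is monotone with respect to the Loewner order on psd matrices. -/

import Mathlib

open Matrix

set_option linter.unusedSectionVars false

variable {n : Type*} [Fintype n] [DecidableEq n]

lemma phi_trace_eq_sum {C : Matrix n n ℝ} (hC : C.IsHermitian) :
    C.trace = ∑ i, hC.eigenvalues i := by
  conv_lhs => rw [hC.spectral_theorem]
  rw [Unitary.conjStarAlgAut_apply, Matrix.trace_mul_cycle, Unitary.coe_star_mul_self, one_mul, trace_diagonal]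
  simp

lemma phi_smul_psd {M : Matrix n n ℝ} (hM : M.PosSemidef) {c : ℝ} (hc : 0 ≤ c) :
    (c • M).PosSemidef := by
  refine ⟨by unfold Matrix.IsHermitian at *; rw [conjTranspose_smul, hM.1]; simp, fun x => ?_⟩
  simpa [Finsupp.mul_sum, mul_assoc, mul_left_comm] using mul_nonneg hc (hM.2 x)

lemma phi_trace_smul_one_sub {C : Matrix n n ℝ} (hC : C.PosSemidef) :
    (C.trace • (1 : Matrix n n ℝ) - C).PosSemidef := by
  have hH := hC.1
  have hle : ∀ i, hH.eigenvalues i ≤ C.trace := fun i => by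
    rw [phi_trace_eq_sum hH]
    exact Finset.single_le_sum (fun j _ => hC.eigenvalues_nonneg j) (Finset.mem_univ i)
  generalize hgen : C.trace = t
  rw [hgen] at hle
  set U : Matrix n n ℝ := (Matrix.IsHermitian.eigenvectorUnitary hH : Matrix n n ℝ) with hU
  have hUU : U * star U = 1 := Unitary.coe_mul_star_self _
  have key : t • (1 : Matrix n n ℝ) - C =
      U * diagonal (fun i => t - hH.eigenvalues i) * star U := by
    have h1 : t • (1 : Matrix n n ℝ) = U * (t • (1 : Matrix n n ℝ)) * star U := by
      rw [mul_smul_comm, mul_one, smul_mul_assoc, hUU]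
    have h2 : C = U * diagonal (RCLike.ofReal ∘ hH.eigenvalues) * star U := hH.spectral_theorem
    rw [h1]; conv_lhs => rw [h2]
    rw [← sub_mul, ← mul_sub]
    congr 2
    ext i j
    rcases eq_or_ne i j with h | h <;>
      simp [diagonal_apply, Matrix.one_apply, h]
  rw [key]
  refine Matrix.PosSemidef.mul_mul_conjTranspose_same ?_ U
  exact posSemidef_diagonal_iff.mpr fun i => sub_nonneg.mpr (hle i)

lemma phi_eq_zero_of_trace_eq_zero {C : Matrix n n ℝ} (hC : C.PosSemidef)
    (h : C.trace = 0) : C = 0 := by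
  have hH := hC.1
  have hev : ∀ i, hH.eigenvalues i = 0 := by
    have hsum : ∑ i, hH.eigenvalues i = 0 := by rw [← phi_trace_eq_sum hH, h]
    intro i
    exact (Finset.sum_eq_zero_iff_of_nonneg
      (fun j _ => hC.eigenvalues_nonneg j)).mp hsum i (Finset.mem_univ i)
  have h2 : C = _ := hH.spectral_theorem
  rw [h2]
  have : diagonal (RCLike.ofReal ∘ hH.eigenvalues) = (0 : Matrix n n ℝ) := by
    ext i j; rcases eq_or_ne i j with hh | hh <;> simp [diagonal_apply, hh, hev]
  rw [this, map_zero]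

lemma phi_sq_psd {M : Matrix n n ℝ} (hM : M.IsHermitian) : (M * M).PosSemidef := by
  have := Matrix.posSemidef_conjTranspose_mul_self M
  rwa [hM.eq] at this

lemma phi_nonneg {C : Matrix n n ℝ} (hC : C.PosSemidef) (hc : 0 < C.trace) :
    (C - C.trace⁻¹ • (C * C)).PosSemidef := by
  have hpsd1 := phi_trace_smul_one_sub hC
  obtain ⟨S, hSH, hSS⟩ : ∃ S : Matrix n n ℝ, Sᴴ = S ∧ S * S = C :=
    open scoped MatrixOrder in
    ⟨CFC.sqrt C, (CFC.sqrt_nonneg C).posSemidef.1, CFC.sqrt_mul_sqrt_self C hC.nonneg⟩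
  generalize hgen : C.trace = c at hc hpsd1 ⊢
  have key : C - c⁻¹ • (C * C) = c⁻¹ • (S * (c • (1 : Matrix n n ℝ) - C) * S) := by
    rw [← hSS]
    rw [mul_sub, sub_mul, mul_smul_comm, mul_one, smul_mul_assoc, smul_sub,
      smul_smul, inv_mul_cancel₀ (ne_of_gt hc), one_smul]
    simp only [mul_assoc]
  rw [key]
  refine phi_smul_psd ?_ (le_of_lt (inv_pos.mpr hc))
  have h1 := hpsd1.mul_mul_conjTranspose_same S
  rwa [hSH] at h1

lemma phi_trace_nonneg {C : Matrix n n ℝ} (hC : C.PosSemidef) : 0 ≤ C.trace := by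
  rw [phi_trace_eq_sum hC.1]
  exact Finset.sum_nonneg fun i _ => hC.eigenvalues_nonneg i

/-- Monotonicity of `Φ(A) = A − A²/Tr(A)` with respect to the Loewner order. -/
theorem phi_monotone {N : ℕ} (A B : Matrix (Fin N) (Fin N) ℝ)
    (hA : A.PosSemidef) (hAB : (B - A).PosSemidef) (htrA : 0 < A.trace) :
    ((B - B.trace⁻¹ • (B * B)) - (A - A.trace⁻¹ • (A * A))).PosSemidef := by
  set C := B - A with hCdef
  have hB : B = A + C := by rw [hCdef]; abel
  rcases eq_or_lt_of_le (phi_trace_nonneg hAB) with hc0 | hc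
  · have hC0 : C = 0 := phi_eq_zero_of_trace_eq_zero hAB hc0.symm
    have hBA : B = A := by rw [hB, hC0, add_zero]
    rw [hBA, sub_self]
    exact Matrix.PosSemidef.zero
  · have htrB : B.trace = A.trace + C.trace := by rw [hB, trace_add]
    have ha' : A.trace ≠ 0 := ne_of_gt htrA
    have hc' : C.trace ≠ 0 := ne_of_gt hc
    have hac' : A.trace + C.trace ≠ 0 := ne_of_gt (by linarith)
    have hM : (C.trace • A - A.trace • C).IsHermitian := by
      unfold Matrix.IsHermitian
      rw [conjTranspose_sub, conjTranspose_smul, conjTranspose_smul, hA.1.eq, hAB.1.eq]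
      simp
    have key : (B - B.trace⁻¹ • (B * B)) - (A - A.trace⁻¹ • (A * A)) =
        (C - C.trace⁻¹ • (C * C)) +
        (A.trace * C.trace * (A.trace + C.trace))⁻¹ •
          ((C.trace • A - A.trace • C) * (C.trace • A - A.trace • C)) := by
      rw [hB, trace_add]
      simp only [sub_mul, mul_sub, add_mul, mul_add, smul_mul_assoc, mul_smul_comm,
        smul_smul, smul_sub, smul_add]
      match_scalars <;> field_simp <;> ring
    rw [key]
    refine (phi_nonneg hAB hc).add (phi_smul_psd (phi_sq_psd hM) ?_)
    positivity
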